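/- Let E be a low-defect expression with associated low-defect tree T (with root v₀) and associated low-defect polynomial f, and for each non-root vertex v of T let x_v denote the variable of E corresponding to v. Then for any subset S of the non-root vertices of T, the monomial ∏_{v∈S} x_v appears in f with nonzero coefficient if and only if the subgraph of T induced by S ∪ {v₀} is a subtree of T (i.e., is connected); and in that case its coefficient equals (∏_{v ∈ S∪{v₀}} w(v)) · (∏_{e an edge of T with exactly one endpoint in S∪{v₀}} w(e)), where w denotes the label. In particular, the constant term of f corresponds to S = ∅ and the leading term to S = all non-root vertices. -/

import Mathlib

/-- `CpxW n k` : the positive integer `n` can be written using exactly `k` ones,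
with an arbitrary combination of additions and multiplications. -/
inductive CpxW : ℕ → ℕ → Prop
  | one : CpxW 1 1
  | add {a b m n : ℕ} : CpxW a m → CpxW b n → CpxW (a + b) (m + n)
  | mul {a b m n : ℕ} : CpxW a m → CpxW b n → CpxW (a * b) (m + n)

/-- The integer complexity `‖n‖`. -/
noncomputable def cpx (n : ℕ) : ℕ := sInf {k | CpxW n k}

/-- Low-defect expressions: built from positive integer constants (rule `const`,
positivity recorded in `LDE.WF`), products (rule `mul`, disjointness of the
variables recorded in `LDE.WF`) and `E·x + c` (rule `step`, freshness of `x`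
recorded in `LDE.WF`).  Variables are indexed by natural numbers. -/
inductive LDE : Type
  | const (n : ℕ) : LDE
  | mul (E₁ E₂ : LDE) : LDE
  | step (E : LDE) (x : ℕ) (c : ℕ) : LDE

/-- The set of variables used by a low-defect expression. -/
def LDE.vars : LDE → Finset ℕ
  | .const _ => ∅
  | .mul E₁ E₂ => E₁.vars ∪ E₂.vars
  | .step E x _ => insert x E.vars

/-- Well-formedness of a low-defect expression: constants are positive, the two
factors of a product use disjoint sets of variables, and the variable of
`E·x + c` does not occur in `E`. -/
def LDE.WF : LDE → Prop
  | .const n => 0 < n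
  | .mul E₁ E₂ => E₁.WF ∧ E₂.WF ∧ Disjoint E₁.vars E₂.vars
  | .step E x c => E.WF ∧ x ∉ E.vars ∧ 0 < c

/-- The polynomial obtained by evaluating a low-defect expression. -/
noncomputable def LDE.poly : LDE → MvPolynomial ℕ ℤ
  | .const n => MvPolynomial.C (n : ℤ)
  | .mul E₁ E₂ => E₁.poly * E₂.poly
  | .step E x c => E.poly * MvPolynomial.X x + MvPolynomial.C (c : ℤ)

/-- The complexity `‖E‖` of a low-defect expression. -/
noncomputable def LDE.cpx : LDE → ℕ
  | .const n => _root_.cpx n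
  | .mul E₁ E₂ => E₁.cpx + E₂.cpx
  | .step E _ c => E.cpx + _root_.cpx c

/-- Low-defect trees: rooted trees whose vertices and edges are labeled by
natural numbers (positivity of the labels is recorded in `LDT.Pos`); a node
carries its label together with the list of its subtrees, each with the label of
the corresponding edge. -/
inductive LDT : Type
  | node (label : ℕ) (children : List (ℕ × LDT)) : LDT

/-- The label of the root. -/
def LDT.label : LDT → ℕ | .node n _ => n

/-- The children (edge label, subtree) of the root. -/
def LDT.children : LDT → List (ℕ × LDT) | .node _ cs => cs

mutual
/-- All labels of a low-defect tree are positive. -/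
def LDT.Pos : LDT → Prop
  | .node n cs => 0 < n ∧ LDT.PosAux cs

def LDT.PosAux : List (ℕ × LDT) → Prop
  | [] => True
  | c :: cs => 0 < c.1 ∧ c.2.Pos ∧ LDT.PosAux cs
end

/-- Isomorphism of labeled rooted trees: a root-preserving, label-preserving
graph isomorphism; concretely, the root labels agree and the children lists
match up to a permutation, recursively. -/
inductive LDT.Iso : LDT → LDT → Prop
  | node (n : ℕ) (cs₁ cs₂ : List (ℕ × LDT)) (σ : Fin cs₁.length ≃ Fin cs₂.length)
      (hlab : ∀ i : Fin cs₁.length, (cs₁.get i).1 = (cs₂.get (σ i)).1)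
      (hiso : ∀ i : Fin cs₁.length, LDT.Iso (cs₁.get i).2 (cs₂.get (σ i)).2) :
      LDT.Iso (.node n cs₁) (.node n cs₂)

/-- The low-defect tree `T(E)` associated to a low-defect expression `E`. -/
def LDE.tree : LDE → LDT
  | .const n => .node n []
  | .step E _ c => .node 1 [(c, E.tree)]
  | .mul E₁ E₂ => .node (E₁.tree.label * E₂.tree.label) (E₁.tree.children ++ E₂.tree.children)

/-- The subtree of a low-defect tree at a position (a path from the root, given
by the list of child indices); `none` if there is no such vertex. -/
def LDT.sub? : LDT → List ℕ → Option LDT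
  | t, [] => some t
  | t, i :: p =>
    match t.children[i]? with
    | some c => LDT.sub? c.2 p
    | none => none

/-- `p` is a vertex of `t` (vertices are encoded by their positions). -/
def LDT.IsVert (t : LDT) (p : List ℕ) : Prop := (t.sub? p).isSome

/-- The label of the vertex at position `p` (junk value `1` if `p` is not a
vertex). -/
def LDT.labelAt (t : LDT) (p : List ℕ) : ℕ := ((t.sub? p).map LDT.label).getD 1

/-- The list of children at position `p`. -/
def LDT.childrenAt (t : LDT) (p : List ℕ) : List (ℕ × LDT) :=
  ((t.sub? p).map LDT.children).getD []

/-- The label of the edge joining the non-root vertex at position `q` to its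
parent (junk value `1` if there is no such edge). -/
def LDT.edgeLabelAt (t : LDT) (q : List ℕ) : ℕ :=
  (((t.sub? q.dropLast).bind (fun s => s.children[q.getLast?.getD 0]?)).map
    Prod.fst).getD 1

mutual
/-- The list of all positions (vertices) of a low-defect tree. -/
def LDT.positions : LDT → List (List ℕ)
  | .node _ cs => [] :: LDT.positionsAux 0 cs

def LDT.positionsAux : ℕ → List (ℕ × LDT) → List (List ℕ)
  | _, [] => []
  | i, c :: cs => (c.2.positions.map (i :: ·)) ++ LDT.positionsAux (i + 1) cs
end

/-- The finite set of vertices (positions) of a low-defect tree. -/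
def LDT.vertFinset (t : LDT) : Finset (List ℕ) := t.positions.toFinset

/-- The finite set of edges of a low-defect tree, an edge being encoded by the
position of its lower (non-root) endpoint. -/
def LDT.edgeFinset (t : LDT) : Finset (List ℕ) := t.positions.toFinset.erase []

/-- The variable of `E` corresponding to the non-root vertex of `T(E)` at a given
position, under the canonical bijection between variables of `E` and non-root
vertices of `T(E)`. -/
def LDE.varAt : LDE → List ℕ → Option ℕ
  | .const _, _ => none
  | .step E x _, p =>
    match p with
    | 0 :: p' => if p' = [] then some x else E.varAt p'
    | _ => none
  | .mul E₁ E₂, p =>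
    match p with
    | i :: p' =>
      if i < E₁.tree.children.length then E₁.varAt (i :: p')
      else E₂.varAt ((i - E₁.tree.children.length) :: p')
    | [] => none

/-- The position of the non-root vertex of `T(E)` corresponding to a variable of
`E`, under the canonical bijection. -/
def LDE.posOf : LDE → ℕ → Option (List ℕ)
  | .const _, _ => none
  | .step E v _, x => if x = v then some [0] else (E.posOf x).map (0 :: ·)
  | .mul E₁ E₂, x =>
    match E₁.posOf x with
    | some p => some p
    | none => (E₂.posOf x).map (fun p =>
        match p with
        | i :: p' => (i + E₁.tree.children.length) :: p'
        | [] => [])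

/-- Adjacency within a set `S` of positions: both endpoints lie in `S` and one is
the parent of the other. -/
def AdjIn (S : Set (List ℕ)) (u v : List ℕ) : Prop :=
  u ∈ S ∧ v ∈ S ∧ ((∃ i, v = u ++ [i]) ∨ (∃ i, u = v ++ [i]))

/-- The subgraph induced by a set `S` of positions is connected. -/
def ConnectedIn (S : Set (List ℕ)) : Prop :=
  ∀ u ∈ S, ∀ v ∈ S, Relation.ReflTransGen (AdjIn S) u v

/-- shift the head of a position up by `k`. -/
def shiftUp (k : ℕ) : List ℕ → List ℕ
  | [] => []
  | j :: p => (j + k) :: p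

def shiftDown (k : ℕ) : List ℕ → List ℕ
  | [] => []
  | j :: p => (j - k) :: p

lemma LDT.sub?_nil (t : LDT) : t.sub? [] = some t := rfl

lemma LDT.sub?_cons (t : LDT) (i : ℕ) (p : List ℕ) :
    t.sub? (i :: p) = Option.bind (t.children[i]?) (fun c => c.2.sub? p) := by
  cases h : t.children[i]? <;> simp [LDT.sub?, h]

lemma tree_step (E : LDE) (x c : ℕ) :
    (LDE.step E x c).tree = .node 1 [(c, E.tree)] := rfl

lemma children_node (n : ℕ) (cs : List (ℕ × LDT)) : (LDT.node n cs).children = cs := rfl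

lemma sub?_step (E : LDE) (x c i : ℕ) (p : List ℕ) :
    (LDE.step E x c).tree.sub? (i :: p) = if i = 0 then E.tree.sub? p else none := by
  rw [tree_step, LDT.sub?_cons]
  cases i <;> simp [children_node]

lemma tree_mul (E₁ E₂ : LDE) :
    (LDE.mul E₁ E₂).tree
      = .node (E₁.tree.label * E₂.tree.label) (E₁.tree.children ++ E₂.tree.children) := rfl

lemma sub?_mul (E₁ E₂ : LDE) (i : ℕ) (p : List ℕ) :
    (LDE.mul E₁ E₂).tree.sub? (i :: p) =
      if i < E₁.tree.children.length then E₁.tree.sub? (i :: p)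
      else E₂.tree.sub? ((i - E₁.tree.children.length) :: p) := by
  rw [tree_mul, LDT.sub?_cons, LDT.sub?_cons, LDT.sub?_cons, children_node]
  by_cases h : i < E₁.tree.children.length
  · rw [List.getElem?_append_left h, if_pos h]
  · rw [List.getElem?_append_right (Nat.le_of_not_lt h), if_neg h]

lemma labelAt_nil (t : LDT) : t.labelAt [] = t.label := rfl

lemma labelAt_congr {t₁ t₂ : LDT} {p₁ p₂ : List ℕ} (h : t₁.sub? p₁ = t₂.sub? p₂) :
    t₁.labelAt p₁ = t₂.labelAt p₂ := by unfold LDT.labelAt; rw [h]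

lemma labelAt_step (E : LDE) (x c : ℕ) (p : List ℕ) :
    (LDE.step E x c).tree.labelAt (0 :: p) = E.tree.labelAt p :=
  labelAt_congr (by rw [sub?_step]; simp)

lemma labelAt_mul (E₁ E₂ : LDE) (i : ℕ) (p : List ℕ) :
    (LDE.mul E₁ E₂).tree.labelAt (i :: p) =
      if i < E₁.tree.children.length then E₁.tree.labelAt (i :: p)
      else E₂.tree.labelAt ((i - E₁.tree.children.length) :: p) := by
  by_cases h : i < E₁.tree.children.length
  · rw [if_pos h]; exact labelAt_congr (by rw [sub?_mul, if_pos h])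
  · rw [if_neg h]; exact labelAt_congr (by rw [sub?_mul, if_neg h])

lemma labelAt_mul_nil (E₁ E₂ : LDE) :
    ((LDE.mul E₁ E₂).tree.labelAt [] : ℤ)
      = (E₁.tree.labelAt [] : ℤ) * (E₂.tree.labelAt [] : ℤ) := by
  rw [labelAt_nil, labelAt_nil, labelAt_nil, tree_mul]
  push_cast [LDT.label]
  ring
lemma list_toFinset_map (l : List (List ℕ)) (f : List ℕ → List ℕ) :
    (l.map f).toFinset = l.toFinset.image f := by
  ext a; simp

lemma edgeLabelAt_def (t : LDT) (q : List ℕ) :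
    t.edgeLabelAt q =
      (((t.sub? q.dropLast).bind (fun s => s.children[q.getLast?.getD 0]?)).map
        Prod.fst).getD 1 := rfl

lemma edgeLabelAt_step_zero (E : LDE) (x c : ℕ) :
    (LDE.step E x c).tree.edgeLabelAt [0] = c := rfl

lemma edgeLabelAt_step (E : LDE) (x c : ℕ) {p : List ℕ} (hp : p ≠ []) :
    (LDE.step E x c).tree.edgeLabelAt (0 :: p) = E.tree.edgeLabelAt p := by
  rw [edgeLabelAt_def, edgeLabelAt_def]
  rw [List.dropLast_cons_of_ne_nil hp]
  rw [sub?_step, if_pos rfl]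
  obtain ⟨a, p', rfl⟩ := List.exists_cons_of_ne_nil hp
  rw [List.getLast?_cons_cons]

lemma edgeLabelAt_mul (E₁ E₂ : LDE) (i : ℕ) (p : List ℕ) :
    (LDE.mul E₁ E₂).tree.edgeLabelAt (i :: p) =
      if i < E₁.tree.children.length then E₁.tree.edgeLabelAt (i :: p)
      else E₂.tree.edgeLabelAt ((i - E₁.tree.children.length) :: p) := by
  rcases eq_or_ne p [] with rfl | hp
  · simp only [edgeLabelAt_def, List.dropLast_singleton, LDT.sub?_nil, Option.bind_some,
      tree_mul, children_node, List.getLast?_singleton, Option.getD_some]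
    by_cases h : i < E₁.tree.children.length
    · rw [if_pos h, List.getElem?_append_left h]
    · rw [if_neg h, List.getElem?_append_right (Nat.le_of_not_lt h)]
  · obtain ⟨a, p', rfl⟩ := List.exists_cons_of_ne_nil hp
    rw [edgeLabelAt_def, edgeLabelAt_def, edgeLabelAt_def]
    rw [List.dropLast_cons_of_ne_nil hp, List.dropLast_cons_of_ne_nil hp,
      List.getLast?_cons_cons, List.getLast?_cons_cons, sub?_mul]
    by_cases h : i < E₁.tree.children.length
    · rw [if_pos h, if_pos h]
    · rw [if_neg h, if_neg h]

lemma positionsAux_append (cs₁ cs₂ : List (ℕ × LDT)) (i : ℕ) :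
    LDT.positionsAux i (cs₁ ++ cs₂)
      = LDT.positionsAux i cs₁ ++ LDT.positionsAux (i + cs₁.length) cs₂ := by
  induction cs₁ generalizing i with
  | nil => simp [LDT.positionsAux]
  | cons c cs ih =>
      simp only [List.cons_append, LDT.positionsAux, List.append_eq, ih, List.append_assoc, List.length_cons]
      rw [show i + (cs.length + 1) = i + 1 + cs.length by omega]

lemma positionsAux_shift (cs : List (ℕ × LDT)) (i k : ℕ) :
    LDT.positionsAux (i + k) cs = (LDT.positionsAux i cs).map (shiftUp k) := by
  induction cs generalizing i with
  | nil => simp [LDT.positionsAux]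
  | cons c cs ih =>
      simp only [LDT.positionsAux, List.map_append, List.map_map]
      rw [show i + k + 1 = (i + 1) + k by omega, ih]
      congr 1

lemma mem_positionsAux {q : List ℕ} {cs : List (ℕ × LDT)} {i : ℕ}
    (h : q ∈ LDT.positionsAux i cs) :
    ∃ j p, q = j :: p ∧ i ≤ j ∧ j < i + cs.length := by
  induction cs generalizing i with
  | nil => simp [LDT.positionsAux] at h
  | cons c cs ih =>
      simp only [LDT.positionsAux, List.mem_append, List.mem_map] at h
      rcases h with ⟨p, _, rfl⟩ | h
      · exact ⟨i, p, rfl, le_refl _, by simp⟩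
      · obtain ⟨j, p, rfl, h1, h2⟩ := ih h
        exact ⟨j, p, rfl, by omega, by simp; omega⟩

lemma positions_eq (t : LDT) : t.positions = [] :: LDT.positionsAux 0 t.children := by
  cases t; rfl

lemma nil_notmem_positionsAux (cs : List (ℕ × LDT)) (i : ℕ) :
    [] ∉ LDT.positionsAux i cs := by
  intro h
  obtain ⟨j, p, h, -⟩ := mem_positionsAux h
  exact absurd h (by simp)

lemma edgeFinset_eq (t : LDT) :
    t.edgeFinset = (LDT.positionsAux 0 t.children).toFinset := by
  unfold LDT.edgeFinset
  rw [positions_eq, List.toFinset_cons,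
    Finset.erase_insert (by simp [nil_notmem_positionsAux])]

lemma vertFinset_eq (t : LDT) : t.vertFinset = insert [] t.edgeFinset := by
  unfold LDT.vertFinset
  rw [positions_eq, List.toFinset_cons, edgeFinset_eq]

lemma edgeFinset_step (E : LDE) (x c : ℕ) :
    (LDE.step E x c).tree.edgeFinset = E.tree.vertFinset.image (0 :: ·) := by
  rw [edgeFinset_eq, tree_step, children_node]
  show (LDT.positionsAux 0 [(c, E.tree)]).toFinset = _
  unfold LDT.positionsAux LDT.positionsAux
  rw [List.append_nil, list_toFinset_map _ _]
  rfl

lemma edgeFinset_mul (E₁ E₂ : LDE) :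
    (LDE.mul E₁ E₂).tree.edgeFinset
      = E₁.tree.edgeFinset ∪ (E₂.tree.edgeFinset).image (shiftUp E₁.tree.children.length) := by
  rw [edgeFinset_eq, edgeFinset_eq, edgeFinset_eq, tree_mul, children_node,
    positionsAux_append, List.toFinset_append,
    show (0 : ℕ) + E₁.tree.children.length = 0 + E₁.tree.children.length from rfl,
    positionsAux_shift, list_toFinset_map _ _]

lemma mem_edgeFinset_ne_nil {t : LDT} {q : List ℕ} (h : q ∈ t.edgeFinset) : q ≠ [] := by
  rw [edgeFinset_eq] at h
  obtain ⟨j, p, rfl, -⟩ := mem_positionsAux (List.mem_toFinset.mp h)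
  exact List.cons_ne_nil _ _

lemma mem_edgeFinset_mul_left {t : LDT} {q : List ℕ} (h : q ∈ t.edgeFinset) :
    ∃ j p, q = j :: p ∧ j < t.children.length := by
  rw [edgeFinset_eq] at h
  obtain ⟨j, p, rfl, h1, h2⟩ := mem_positionsAux (List.mem_toFinset.mp h)
  exact ⟨j, p, rfl, by omega⟩
lemma varAt_step (E : LDE) (x c : ℕ) (p' : List ℕ) :
    (LDE.step E x c).varAt (0 :: p') = if p' = [] then some x else E.varAt p' := rfl

lemma varAt_mul (E₁ E₂ : LDE) (i : ℕ) (p' : List ℕ) :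
    (LDE.mul E₁ E₂).varAt (i :: p') =
      if i < E₁.tree.children.length then E₁.varAt (i :: p')
      else E₂.varAt ((i - E₁.tree.children.length) :: p') := rfl

lemma varAt_mem_vars : ∀ (E : LDE) {p : List ℕ} {y : ℕ}, E.varAt p = some y → y ∈ E.vars := by
  intro E
  induction E with
  | const n => intro p y h; simp [LDE.varAt] at h
  | mul E₁ E₂ ih₁ ih₂ =>
      intro p y h
      match p with
      | [] => simp [LDE.varAt] at h
      | i :: p' =>
          rw [varAt_mul] at h
          rw [show (LDE.mul E₁ E₂).vars = E₁.vars ∪ E₂.vars from rfl, Finset.mem_union]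
          split at h
          · exact Or.inl (ih₁ h)
          · exact Or.inr (ih₂ h)
  | step E x c ih =>
      intro p y h
      rw [show (LDE.step E x c).vars = insert x E.vars from rfl, Finset.mem_insert]
      match p with
      | [] => simp [LDE.varAt] at h
      | 0 :: p' =>
          rw [varAt_step] at h
          split at h
          · exact Or.inl (Option.some_injective _ h).symm
          · exact Or.inr (ih h)
      | (i+1) :: p' => simp [LDE.varAt] at h

lemma poly_supp : ∀ (E : LDE) (m : ℕ →₀ ℕ), E.poly.coeff m ≠ 0 → m.support ⊆ E.vars := by
  intro E
  induction E with
  | const n =>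
      intro m h
      rw [show (LDE.const n).poly = MvPolynomial.C (n : ℤ) from rfl, MvPolynomial.coeff_C] at h
      split at h
      · next h0 => rw [← h0]; simp [LDE.vars]
      · exact absurd rfl h
  | mul E₁ E₂ ih₁ ih₂ =>
      intro m h
      rw [show (LDE.mul E₁ E₂).poly = E₁.poly * E₂.poly from rfl, MvPolynomial.coeff_mul] at h
      obtain ⟨x, hx, hne⟩ := Finset.exists_ne_zero_of_sum_ne_zero h
      rw [Finset.HasAntidiagonal.mem_antidiagonal] at hx
      rw [mul_ne_zero_iff] at hne
      rw [← hx]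
      refine (Finsupp.support_add).trans ?_
      rw [show (LDE.mul E₁ E₂).vars = E₁.vars ∪ E₂.vars from rfl]
      exact Finset.union_subset_union (ih₁ _ hne.1) (ih₂ _ hne.2)
  | step E x c ih =>
      intro m h
      rw [show (LDE.step E x c).poly = E.poly * MvPolynomial.X x + MvPolynomial.C (c : ℤ) from rfl,
        MvPolynomial.coeff_add] at h
      rw [show (LDE.step E x c).vars = insert x E.vars from rfl]
      rcases (by by_contra hc; push_neg at hc; rw [hc.1, hc.2, add_zero] at h; exact h rfl :
        MvPolynomial.coeff m (E.poly * MvPolynomial.X x) ≠ 0 ∨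
          MvPolynomial.coeff m (MvPolynomial.C (c : ℤ)) ≠ 0) with h1 | h2
      · rw [MvPolynomial.coeff_mul_X'] at h1
        split at h1
        · next hxm =>
            have hsub := ih _ h1
            intro y hy
            by_cases hyx : y = x
            · rw [hyx]; exact Finset.mem_insert_self _ _
            · refine Finset.mem_insert_of_mem (hsub ?_)
              rw [Finsupp.mem_support_iff] at hy ⊢
              rwa [Finsupp.tsub_apply, Finsupp.single_apply, if_neg (fun hh => hyx hh.symm),
                Nat.sub_zero]
        · exact absurd rfl h1
      · rw [MvPolynomial.coeff_C] at h2
        split at h2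
        · next h0 => rw [← h0]; simp
        · exact absurd rfl h2

lemma msum_apply (S : Finset (List ℕ)) (xv : List ℕ → ℕ) (y : ℕ) :
    (∑ p ∈ S, Finsupp.single (xv p) 1) y = ∑ p ∈ S, if xv p = y then 1 else 0 := by
  classical
  rw [Finset.sum_apply']
  exact Finset.sum_congr rfl (fun p _ => Finsupp.single_apply)

lemma msum_supp {S : Finset (List ℕ)} {xv : List ℕ → ℕ} {V : Finset ℕ}
    (h : ∀ p ∈ S, xv p ∈ V) : (∑ p ∈ S, Finsupp.single (xv p) 1).support ⊆ V := by
  classical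
  intro y hy
  rw [Finsupp.mem_support_iff, msum_apply] at hy
  obtain ⟨p, hp, hne⟩ := Finset.exists_ne_zero_of_sum_ne_zero hy
  split at hne
  · next he => exact he ▸ h p hp
  · exact absurd rfl hne

lemma msum_ne_zero {S : Finset (List ℕ)} {xv : List ℕ → ℕ} (hS : S.Nonempty) :
    (∑ p ∈ S, Finsupp.single (xv p) 1) ≠ 0 := by
  classical
  obtain ⟨p₀, hp₀⟩ := hS
  intro h0
  have h1 : (∑ p ∈ S, Finsupp.single (xv p) 1) (xv p₀) = 0 := by rw [h0]; rfl
  rw [msum_apply] at h1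
  have h2 : (1 : ℕ) ≤ ∑ p ∈ S, if xv p = xv p₀ then 1 else 0 := by
    have := Finset.single_le_sum (f := fun p => if xv p = xv p₀ then (1:ℕ) else 0)
      (fun i _ => by positivity) hp₀
    simpa using this
  omega
lemma adjIn_symm {S : Set (List ℕ)} : Symmetric (AdjIn S) := by
  intro u v ⟨hu, hv, h⟩
  exact ⟨hv, hu, h.symm⟩

lemma rtg_symm {α : Type*} {r : α → α → Prop} (hs : Symmetric r) {u v : α}
    (h : Relation.ReflTransGen r u v) : Relation.ReflTransGen r v u := by
  induction h with
  | refl => exact .refl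
  | tail _ h₂ ih => exact (Relation.ReflTransGen.single (hs h₂)).trans ih

lemma adjIn_mono {S S' : Set (List ℕ)} (h : S ⊆ S') {u v : List ℕ} (ha : AdjIn S u v) :
    AdjIn S' u v := ⟨h ha.1, h ha.2.1, ha.2.2⟩

lemma rtg_mono {S S' : Set (List ℕ)} (h : S ⊆ S') {u v : List ℕ} :
    Relation.ReflTransGen (AdjIn S) u v → Relation.ReflTransGen (AdjIn S') u v :=
  fun hr => Relation.ReflTransGen.mono (fun _ _ => adjIn_mono h) u v hr

lemma rtg_map {S S' : Set (List ℕ)} (f : List ℕ → List ℕ)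
    (hadj : ∀ u v, AdjIn S u v → Relation.ReflTransGen (AdjIn S') (f u) (f v))
    {u v : List ℕ} (h : Relation.ReflTransGen (AdjIn S) u v) :
    Relation.ReflTransGen (AdjIn S') (f u) (f v) := by
  induction h with
  | refl => exact .refl
  | tail _ h₂ ih => exact ih.trans (hadj _ _ h₂)

lemma connectedIn_of_map {S S' : Set (List ℕ)} (f : List ℕ → List ℕ)
    (hsurj : ∀ u' ∈ S', ∃ u ∈ S, f u = u')
    (hadj : ∀ u v, AdjIn S u v → Relation.ReflTransGen (AdjIn S') (f u) (f v))
    (h : ConnectedIn S) : ConnectedIn S' := by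
  intro u' hu' v' hv'
  obtain ⟨u, hu, rfl⟩ := hsurj u' hu'
  obtain ⟨v, hv, rfl⟩ := hsurj v' hv'
  exact rtg_map f hadj (h u hu v hv)

/-- If two families of positions have disjoint head-intervals, an adjacency in the
combined graph cannot cross from one side to the other except at the root. -/
lemma adj_sep {A B : Set (List ℕ)} {k : ℕ}
    (hA : ∀ p ∈ A, ∃ j q, p = j :: q ∧ j < k)
    (hB : ∀ p ∈ B, ∃ j q, p = j :: q ∧ k ≤ j)
    {u v : List ℕ} (h : AdjIn (insert [] (A ∪ B)) u v)
    (hu : u ∈ insert ([] : List ℕ) A) (hv : v ∉ insert ([] : List ℕ) A) : u = [] := by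
  obtain ⟨hu', hv', hadj⟩ := h
  have hvB : v ∈ B := by
    rcases hv' with rfl | hv'
    · exact absurd (Set.mem_insert _ _) hv
    · rcases hv' with h' | h'
      · exact absurd (Set.mem_insert_of_mem _ h') hv
      · exact h'
  obtain ⟨j, q, rfl, hj⟩ := hB _ hvB
  rcases hu with rfl | huA
  · rfl
  · obtain ⟨j', q', rfl, hj'⟩ := hA _ huA
    exfalso
    rcases hadj with ⟨i, hi⟩ | ⟨i, hi⟩ <;>
      · rw [List.cons_append] at hi
        injection hi with h1 _
        omega

lemma adj_sep' {A B : Set (List ℕ)} {k : ℕ}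
    (hA : ∀ p ∈ A, ∃ j q, p = j :: q ∧ j < k)
    (hB : ∀ p ∈ B, ∃ j q, p = j :: q ∧ k ≤ j)
    {u v : List ℕ} (h : AdjIn (insert [] (A ∪ B)) u v)
    (hu : u ∈ insert ([] : List ℕ) B) (hv : v ∉ insert ([] : List ℕ) B) : u = [] := by
  obtain ⟨hu', hv', hadj⟩ := h
  have hvA : v ∈ A := by
    rcases hv' with rfl | hv'
    · exact absurd (Set.mem_insert _ _) hv
    · rcases hv' with h' | h'
      · exact h'
      · exact absurd (Set.mem_insert_of_mem _ h') hv
  obtain ⟨j, q, rfl, hj⟩ := hA _ hvA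
  rcases hu with rfl | huB
  · rfl
  · obtain ⟨j', q', rfl, hj'⟩ := hB _ huB
    exfalso
    rcases hadj with ⟨i, hi⟩ | ⟨i, hi⟩ <;>
      · rw [List.cons_append] at hi
        injection hi with h1 _
        omega

lemma connectedIn_proj {W T : Set (List ℕ)} (hTW : T ⊆ W) (hnil : ([] : List ℕ) ∈ T)
    (hsep : ∀ u v, AdjIn W u v → u ∈ T → v ∉ T → u = [])
    (h : ConnectedIn W) : ConnectedIn T := by
  classical
  refine connectedIn_of_map (fun w => if w ∈ T then w else []) ?_ ?_ h
  · intro u' hu'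
    exact ⟨u', hTW hu', if_pos hu'⟩
  · intro u v hadj
    by_cases hu : u ∈ T <;> by_cases hv : v ∈ T <;>
      simp only [if_pos, if_neg, hu, hv, if_true, if_false]
    · exact Relation.ReflTransGen.single ⟨hu, hv, hadj.2.2⟩
    · rw [hsep u v hadj hu hv]
    · rw [hsep v u (adjIn_symm hadj) hv hu]
    · exact .refl

lemma connectedIn_split {A B : Set (List ℕ)} {k : ℕ}
    (hA : ∀ p ∈ A, ∃ j q, p = j :: q ∧ j < k)
    (hB : ∀ p ∈ B, ∃ j q, p = j :: q ∧ k ≤ j) :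
    ConnectedIn (insert [] (A ∪ B)) ↔ ConnectedIn (insert [] A) ∧ ConnectedIn (insert [] B) := by
  have hsubA : insert ([] : List ℕ) A ⊆ insert [] (A ∪ B) :=
    Set.insert_subset_insert Set.subset_union_left
  have hsubB : insert ([] : List ℕ) B ⊆ insert [] (A ∪ B) :=
    Set.insert_subset_insert Set.subset_union_right
  constructor
  · intro h
    constructor
    · exact connectedIn_proj hsubA (Set.mem_insert _ _)
        (fun u v hadj hu hv => adj_sep hA hB hadj hu hv) h
    · exact connectedIn_proj hsubB (Set.mem_insert _ _)
        (fun u v hadj hu hv => adj_sep' hA hB hadj hu hv) h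
  · rintro ⟨h1, h2⟩
    have toNil : ∀ w ∈ insert ([] : List ℕ) (A ∪ B),
        Relation.ReflTransGen (AdjIn (insert [] (A ∪ B))) w [] := by
      intro w hw
      rcases hw with rfl | hw
      · exact .refl
      · rcases hw with hw | hw
        · exact rtg_mono hsubA (h1 w (Set.mem_insert_of_mem _ hw) [] (Set.mem_insert _ _))
        · exact rtg_mono hsubB (h2 w (Set.mem_insert_of_mem _ hw) [] (Set.mem_insert _ _))
    intro u hu v hv
    exact (toNil u hu).trans (rtg_symm adjIn_symm (toNil v hv))

lemma shiftUp_append (k : ℕ) (u : List ℕ) (i : ℕ) :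
    ∃ i', shiftUp k (u ++ [i]) = shiftUp k u ++ [i'] := by
  cases u with
  | nil => exact ⟨i + k, rfl⟩
  | cons a p => exact ⟨i, rfl⟩

lemma shiftDown_append (k : ℕ) (u : List ℕ) (i : ℕ) :
    ∃ i', shiftDown k (u ++ [i]) = shiftDown k u ++ [i'] := by
  cases u with
  | nil => exact ⟨i - k, rfl⟩
  | cons a p => exact ⟨i, rfl⟩

lemma shiftDown_shiftUp (k : ℕ) {p : List ℕ} : shiftDown k (shiftUp k p) = p := by
  cases p with
  | nil => rfl
  | cons a q => simp [shiftUp, shiftDown]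

lemma connectedIn_shift {B : Set (List ℕ)} (k : ℕ) :
    ConnectedIn (insert [] ((shiftUp k) '' B)) ↔ ConnectedIn (insert [] B) := by
  constructor
  · refine fun h => connectedIn_of_map (shiftDown k) ?_ ?_ h
    · intro u' hu'
      rcases hu' with rfl | hu'
      · exact ⟨[], Set.mem_insert _ _, rfl⟩
      · exact ⟨shiftUp k u', Set.mem_insert_of_mem _ (Set.mem_image_of_mem _ hu'),
          shiftDown_shiftUp k⟩
    · rintro u v ⟨hu, hv, hadj⟩
      have hmem : ∀ w, w ∈ insert ([] : List ℕ) (shiftUp k '' B) →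
          shiftDown k w ∈ insert ([] : List ℕ) B := by
        rintro w (rfl | ⟨b, hb, rfl⟩)
        · exact Set.mem_insert _ _
        · rw [shiftDown_shiftUp]; exact Set.mem_insert_of_mem _ hb
      refine Relation.ReflTransGen.single ⟨hmem u hu, hmem v hv, ?_⟩
      rcases hadj with ⟨i, rfl⟩ | ⟨i, rfl⟩
      · obtain ⟨i', hi'⟩ := shiftDown_append k u i
        exact Or.inl ⟨i', hi'⟩
      · obtain ⟨i', hi'⟩ := shiftDown_append k v i
        exact Or.inr ⟨i', hi'⟩
  · refine fun h => connectedIn_of_map (shiftUp k) ?_ ?_ h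
    · intro u' hu'
      rcases hu' with rfl | ⟨b, hb, rfl⟩
      · exact ⟨[], Set.mem_insert _ _, rfl⟩
      · exact ⟨b, Set.mem_insert_of_mem _ hb, rfl⟩
    · rintro u v ⟨hu, hv, hadj⟩
      have hmem : ∀ w, w ∈ insert ([] : List ℕ) B →
          shiftUp k w ∈ insert ([] : List ℕ) (shiftUp k '' B) := by
        rintro w (rfl | hw)
        · exact Set.mem_insert _ _
        · exact Set.mem_insert_of_mem _ (Set.mem_image_of_mem _ hw)
      refine Relation.ReflTransGen.single ⟨hmem u hu, hmem v hv, ?_⟩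
      rcases hadj with ⟨i, rfl⟩ | ⟨i, rfl⟩
      · obtain ⟨i', hi'⟩ := shiftUp_append k u i
        exact Or.inl ⟨i', hi'⟩
      · obtain ⟨i', hi'⟩ := shiftUp_append k v i
        exact Or.inr ⟨i', hi'⟩

lemma connectedIn_cons (W : Set (List ℕ)) (hW : ([] : List ℕ) ∈ W) :
    ConnectedIn (insert [] ((0 :: ·) '' W)) ↔ ConnectedIn W := by
  constructor
  · intro h u hu v hv
    have hmem : ∀ w, w ∈ W → (0 :: w) ∈ insert ([] : List ℕ) ((0 :: ·) '' W) :=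
      fun w hw => Set.mem_insert_of_mem _ (Set.mem_image_of_mem _ hw)
    have hpath := h (0 :: u) (hmem u hu) (0 :: v) (hmem v hv)
    have := rtg_map (S' := W) List.tail ?_ hpath
    · simpa using this
    · rintro a b ⟨ha, hb, hadj⟩
      match a, ha, b, hb with
      | [], _, [], _ => exact .refl
      | [], _, w, hb =>
          rcases hadj with ⟨i, hi⟩ | ⟨i, hi⟩
          · rw [List.nil_append] at hi
            subst hi
            exact .refl
          · simp at hi
      | w, hb, [], _ =>
          rcases hadj with ⟨i, hi⟩ | ⟨i, hi⟩
          · simp at hi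
          · rw [List.nil_append] at hi
            subst hi
            exact .refl
      | a₀ :: a', ha, b₀ :: b', hb =>
          have ha' : a' ∈ W := by
            rcases ha with h' | ⟨w, hw, h'⟩
            · exact absurd h' (List.cons_ne_nil _ _)
            · obtain ⟨rfl, rfl⟩ : a₀ = 0 ∧ w = a' := by
                constructor <;> injection h'.symm <;> simp_all
              exact hw
          have hb' : b' ∈ W := by
            rcases hb with h' | ⟨w, hw, h'⟩
            · exact absurd h' (List.cons_ne_nil _ _)
            · obtain ⟨rfl, rfl⟩ : b₀ = 0 ∧ w = b' := by
                constructor <;> injection h'.symm <;> simp_all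
              exact hw
          refine Relation.ReflTransGen.single ⟨ha', hb', ?_⟩
          rcases hadj with ⟨i, hi⟩ | ⟨i, hi⟩
          · rw [List.cons_append] at hi
            injection hi with _ h2
            exact Or.inl ⟨i, h2⟩
          · rw [List.cons_append] at hi
            injection hi with _ h2
            exact Or.inr ⟨i, h2⟩
  · intro h
    have hmap : ∀ a b, AdjIn W a b →
        Relation.ReflTransGen (AdjIn (insert [] ((0 :: ·) '' W))) (0 :: a) (0 :: b) := by
      rintro a b ⟨ha, hb, hadj⟩
      refine Relation.ReflTransGen.single
        ⟨Set.mem_insert_of_mem _ (Set.mem_image_of_mem _ ha),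
         Set.mem_insert_of_mem _ (Set.mem_image_of_mem _ hb), ?_⟩
      rcases hadj with ⟨i, rfl⟩ | ⟨i, rfl⟩
      · exact Or.inl ⟨i, rfl⟩
      · exact Or.inr ⟨i, rfl⟩
    have toRoot : ∀ w ∈ insert ([] : List ℕ) ((0 :: ·) '' W),
        Relation.ReflTransGen (AdjIn (insert [] ((0 :: ·) '' W))) w [0] := by
      rintro w (rfl | ⟨b, hb, rfl⟩)
      · exact Relation.ReflTransGen.single
          ⟨Set.mem_insert _ _, Set.mem_insert_of_mem _ ⟨[], hW, rfl⟩, Or.inl ⟨0, rfl⟩⟩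
      · exact rtg_map (S := W) (fun w => 0 :: w) hmap (h b hb [] hW)
    intro u hu v hv
    exact (toRoot u hu).trans (rtg_symm adjIn_symm (toRoot v hv))
lemma supp_zero_outside {n : ℕ →₀ ℕ} {C : Finset ℕ} (hC : n.support ⊆ C) {y : ℕ}
    (hy : y ∉ C) : n y = 0 := by
  by_contra h
  exact hy (hC (Finsupp.mem_support_iff.mpr h))

set_option maxHeartbeats 1000000 in
lemma coeff_mul_disjoint {f g : MvPolynomial ℕ ℤ} {A B : Finset ℕ}
    (hf : ∀ a : ℕ →₀ ℕ, f.coeff a ≠ 0 → a.support ⊆ A)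
    (hg : ∀ b : ℕ →₀ ℕ, g.coeff b ≠ 0 → b.support ⊆ B)
    (hAB : Disjoint A B) {m₁ m₂ : ℕ →₀ ℕ}
    (h₁ : m₁.support ⊆ A) (h₂ : m₂.support ⊆ B) :
    (f * g).coeff (m₁ + m₂) = f.coeff m₁ * g.coeff m₂ := by
  classical
  rw [MvPolynomial.coeff_mul]
  refine Finset.sum_eq_single (m₁, m₂) ?_ ?_
  · rintro ⟨a, b⟩ hx hne
    rw [Finset.HasAntidiagonal.mem_antidiagonal] at hx
    by_contra hc
    have hx1 := hf _ (left_ne_zero_of_mul hc)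
    have hx2 := hg _ (right_ne_zero_of_mul hc)
    apply hne
    have happ : ∀ y, a y + b y = m₁ y + m₂ y := by
      intro y
      have := congrArg (fun F : ℕ →₀ ℕ => F y) hx
      simpa [Finsupp.add_apply] using this
    have key : ∀ y, a y = m₁ y ∧ b y = m₂ y := by
      intro y
      by_cases hyA : y ∈ A
      · have hyB : y ∉ B := Finset.disjoint_left.mp hAB hyA
        have e1 : b y = 0 := supp_zero_outside hx2 hyB
        have e2 : m₂ y = 0 := supp_zero_outside h₂ hyB
        have e3 := happ y
        omega
      · have e1 : a y = 0 := supp_zero_outside hx1 hyA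
        have e2 : m₁ y = 0 := supp_zero_outside h₁ hyA
        have e3 := happ y
        omega
    refine Prod.ext ?_ ?_ <;> [skip; skip] <;> first
      | exact Finsupp.ext (fun y => (key y).1)
      | exact Finsupp.ext (fun y => (key y).2)
  · intro hnotin
    exfalso
    apply hnotin
    rw [Finset.HasAntidiagonal.mem_antidiagonal]

lemma poly_const (n : ℕ) : (LDE.const n).poly = MvPolynomial.C (n : ℤ) := rfl
lemma poly_mul (E₁ E₂ : LDE) : (LDE.mul E₁ E₂).poly = E₁.poly * E₂.poly := rfl
lemma poly_step (E : LDE) (x c : ℕ) :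
    (LDE.step E x c).poly = E.poly * MvPolynomial.X x + MvPolynomial.C (c : ℤ) := rfl
lemma tree_const (n : ℕ) : (LDE.const n).tree = .node n [] := rfl

lemma cons_of_mem {S : Finset (List ℕ)} (hSvert : ∀ p ∈ S, p ≠ ([] : List ℕ) ∧ True)
    {p : List ℕ} (hp : p ∈ S) : ∃ i p', p = i :: p' := by
  rcases p with _ | ⟨i, p'⟩
  · exact absurd rfl (hSvert _ hp).1
  · exact ⟨i, p', rfl⟩

lemma shiftUp_cons (k j : ℕ) (p : List ℕ) : shiftUp k (j :: p) = (j + k) :: p := rfl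
lemma shiftDown_cons (k j : ℕ) (p : List ℕ) : shiftDown k (j :: p) = (j - k) :: p := rfl
lemma cons_inj_on (a : ℕ) : ∀ (u v : List ℕ), a :: u = a :: v → u = v := by
  intro u v h
  injection h

lemma connectedIn_singleton : ConnectedIn ↑(insert ([] : List ℕ) (∅ : Finset (List ℕ))) := by
  intro u hu v hv
  simp only [Finset.insert_empty, Finset.coe_singleton, Set.mem_singleton_iff] at hu hv
  subst hu; subst hv
  exact .refl

lemma master : ∀ (E : LDE), E.WF → ∀ (S : Finset (List ℕ)),
    (∀ p ∈ S, p ≠ ([] : List ℕ) ∧ E.tree.IsVert p) →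
    ∀ (xv : List ℕ → ℕ), (∀ p ∈ S, E.varAt p = some (xv p)) →
    (MvPolynomial.coeff (∑ p ∈ S, Finsupp.single (xv p) 1) E.poly ≠ 0 ↔
      ConnectedIn ↑(insert ([] : List ℕ) S)) ∧
    (ConnectedIn ↑(insert ([] : List ℕ) S) →
      MvPolynomial.coeff (∑ p ∈ S, Finsupp.single (xv p) 1) E.poly =
        (∏ p ∈ insert ([] : List ℕ) S, (E.tree.labelAt p : ℤ)) *
        ∏ q ∈ E.tree.edgeFinset,
          if Xor (q ∈ insert ([] : List ℕ) S) (q.dropLast ∈ insert ([] : List ℕ) S)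
          then (E.tree.edgeLabelAt q : ℤ) else 1) := by
  classical
  intro E
  induction E with
  | const n =>
      intro hE S hSvert xv hxv
      have hSempty : S = ∅ := by
        ext p
        simp only [Finset.notMem_empty, iff_false]
        intro hp
        obtain ⟨hne, hv⟩ := hSvert p hp
        obtain ⟨i, p', rfl⟩ : ∃ i p', p = i :: p' := by
          rcases p with _ | ⟨i, p'⟩
          · exact absurd rfl hne
          · exact ⟨i, p', rfl⟩
        rw [LDT.IsVert, LDT.sub?_cons, tree_const, children_node] at hv
        simp at hv
      subst hSempty
      have hcoeff : MvPolynomial.coeff (∑ p ∈ (∅ : Finset (List ℕ)), Finsupp.single (xv p) 1)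
          (LDE.const n).poly = (n : ℤ) := by
        rw [Finset.sum_empty, poly_const, MvPolynomial.coeff_C, if_pos rfl]
      have hne : (n : ℤ) ≠ 0 := by
        have h : 0 < n := hE
        positivity
      constructor
      · rw [hcoeff]
        exact ⟨fun _ => connectedIn_singleton, fun _ => hne⟩
      · intro _
        rw [hcoeff]
        have hlab : ∏ p ∈ insert ([] : List ℕ) (∅ : Finset (List ℕ)),
            ((LDE.const n).tree.labelAt p : ℤ) = (n : ℤ) := by
          rw [Finset.insert_empty, Finset.prod_singleton, labelAt_nil, tree_const]
          rfl
        have hedge : (LDE.const n).tree.edgeFinset = ∅ := by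
          rw [edgeFinset_eq, tree_const, children_node]
          rfl
        rw [hlab, hedge, Finset.prod_empty, mul_one]
  | mul E₁ E₂ ih₁ ih₂ =>
      intro hE S hSvert xv hxv
      obtain ⟨h1, h2, hdisj⟩ := hE
      have hshape : ∀ p ∈ S, ∃ i p', p = i :: p' := by
        intro p hp
        rcases p with _ | ⟨i, p'⟩
        · exact absurd rfl (hSvert _ hp).1
        · exact ⟨i, p', rfl⟩
      set S₁ := S.filter (fun p => p.headI < E₁.tree.children.length) with hS₁def
      set S₂p := S.filter (fun p => ¬ p.headI < E₁.tree.children.length) with hS₂pdef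
      set S₂ := S₂p.image (shiftDown E₁.tree.children.length) with hS₂def
      have hS₁mem : ∀ p, p ∈ S₁ ↔ (p ∈ S ∧ p.headI < E₁.tree.children.length) := by
        intro p
        rw [hS₁def]
        exact Finset.mem_filter
      have hS₂pmem : ∀ p, p ∈ S₂p ↔ (p ∈ S ∧ ¬ p.headI < E₁.tree.children.length) := by
        intro p
        rw [hS₂pdef]
        exact Finset.mem_filter
      have hS₁shape : ∀ p ∈ S₁, ∃ i p', p = i :: p' ∧ i < E₁.tree.children.length := by
        intro p hp
        obtain ⟨i, p', rfl⟩ := hshape p ((hS₁mem _).mp hp).1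
        exact ⟨i, p', rfl, by simpa [List.headI] using ((hS₁mem _).mp hp).2⟩
      have hS₂pshape : ∀ p ∈ S₂p, ∃ i p', p = i :: p' ∧ E₁.tree.children.length ≤ i := by
        intro p hp
        obtain ⟨i, p', rfl⟩ := hshape p ((hS₂pmem _).mp hp).1
        refine ⟨i, p', rfl, Nat.le_of_not_lt ?_⟩
        simpa [List.headI] using ((hS₂pmem _).mp hp).2
      have hup : ∀ p ∈ S₂p, shiftUp E₁.tree.children.length
          (shiftDown E₁.tree.children.length p) = p := by
        intro p hp
        obtain ⟨i, p', rfl, hi⟩ := hS₂pshape p hp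
        rw [shiftDown_cons, shiftUp_cons, Nat.sub_add_cancel hi]
      have hS₂img : S₂.image (shiftUp E₁.tree.children.length) = S₂p := by
        rw [hS₂def, Finset.image_image]
        calc S₂p.image (shiftUp E₁.tree.children.length ∘ shiftDown E₁.tree.children.length)
              = S₂p.image id := Finset.image_congr (fun p hp => hup p hp)
          _ = S₂p := Finset.image_id
      have hdown_inj : ∀ a ∈ S₂p, ∀ b ∈ S₂p,
          shiftDown E₁.tree.children.length a = shiftDown E₁.tree.children.length b → a = b := by
        intro a ha b hb hab
        have h := congrArg (shiftUp E₁.tree.children.length) hab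
        rwa [hup a ha, hup b hb] at h
      have hup_inj : ∀ (a b : List ℕ),
          shiftUp E₁.tree.children.length a = shiftUp E₁.tree.children.length b → a = b := by
        intro a b hab
        have h := congrArg (shiftDown E₁.tree.children.length) hab
        rwa [shiftDown_shiftUp, shiftDown_shiftUp] at h
      have hSvert₁ : ∀ p ∈ S₁, p ≠ ([] : List ℕ) ∧ E₁.tree.IsVert p := by
        intro p hp
        obtain ⟨i, p', rfl, hi⟩ := hS₁shape p hp
        have hv := (hSvert _ ((hS₁mem _).mp hp).1).2
        rw [LDT.IsVert, sub?_mul, if_pos hi] at hv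
        exact ⟨fun h => absurd h (by simp), hv⟩
      have hxv₁ : ∀ p ∈ S₁, E₁.varAt p = some (xv p) := by
        intro p hp
        obtain ⟨i, p', rfl, hi⟩ := hS₁shape p hp
        have h := hxv _ ((hS₁mem _).mp hp).1
        rwa [varAt_mul, if_pos hi] at h
      have hSvert₂ : ∀ p ∈ S₂, p ≠ ([] : List ℕ) ∧ E₂.tree.IsVert p := by
        intro p hp
        rw [hS₂def] at hp
        obtain ⟨q, hq, rfl⟩ := Finset.mem_image.mp hp
        obtain ⟨i, p', rfl, hi⟩ := hS₂pshape q hq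
        have hv := (hSvert _ ((hS₂pmem _).mp hq).1).2
        rw [LDT.IsVert, sub?_mul, if_neg (Nat.not_lt.mpr hi)] at hv
        rw [shiftDown_cons]
        exact ⟨fun h => absurd h (by simp), hv⟩
      have hxv₂ : ∀ p ∈ S₂, E₂.varAt p = some (xv (shiftUp E₁.tree.children.length p)) := by
        intro p hp
        rw [hS₂def] at hp
        obtain ⟨q, hq, rfl⟩ := Finset.mem_image.mp hp
        rw [hup q hq]
        obtain ⟨i, p', rfl, hi⟩ := hS₂pshape q hq
        have h := hxv _ ((hS₂pmem _).mp hq).1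
        rw [varAt_mul, if_neg (Nat.not_lt.mpr hi)] at h
        rw [shiftDown_cons]
        exact h
      obtain ⟨IHa1, IHa2⟩ := ih₁ h1 S₁ hSvert₁ xv hxv₁
      obtain ⟨IHb1, IHb2⟩ := ih₂ h2 S₂ hSvert₂ (fun p => xv (shiftUp E₁.tree.children.length p)) hxv₂
      have hunion : S₁ ∪ S₂p = S := by
        rw [hS₁def, hS₂pdef]
        exact Finset.filter_union_filter_not_eq _ S
      have hsum : (∑ p ∈ S, Finsupp.single (xv p) 1)
          = (∑ p ∈ S₁, Finsupp.single (xv p) 1)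
            + ∑ p ∈ S₂, Finsupp.single (xv (shiftUp E₁.tree.children.length p)) 1 := by
        have e2 : (∑ p ∈ S₂, Finsupp.single (xv (shiftUp E₁.tree.children.length p)) 1)
            = ∑ p ∈ S₂p, Finsupp.single (xv p) 1 := by
          rw [hS₂def, Finset.sum_image hdown_inj]
          exact Finset.sum_congr rfl (fun q hq => by rw [hup q hq])
        rw [e2, hS₁def, hS₂pdef, Finset.sum_filter_add_sum_filter_not]
      have hcoeff : MvPolynomial.coeff (∑ p ∈ S, Finsupp.single (xv p) 1) (LDE.mul E₁ E₂).poly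
          = MvPolynomial.coeff (∑ p ∈ S₁, Finsupp.single (xv p) 1) E₁.poly *
            MvPolynomial.coeff
              (∑ p ∈ S₂, Finsupp.single (xv (shiftUp E₁.tree.children.length p)) 1) E₂.poly := by
        rw [hsum, poly_mul]
        exact coeff_mul_disjoint (poly_supp E₁) (poly_supp E₂) hdisj
          (msum_supp (fun p hp => varAt_mem_vars E₁ (hxv₁ p hp)))
          (msum_supp (fun p hp => varAt_mem_vars E₂ (hxv₂ p hp)))
      have hA : ∀ p ∈ (↑S₁ : Set (List ℕ)), ∃ j q, p = j :: q ∧ j < E₁.tree.children.length := by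
        intro p hp
        obtain ⟨i, p', rfl, hi⟩ := hS₁shape p hp
        exact ⟨i, p', rfl, hi⟩
      have hB : ∀ p ∈ (↑S₂p : Set (List ℕ)), ∃ j q, p = j :: q ∧ E₁.tree.children.length ≤ j := by
        intro p hp
        obtain ⟨i, p', rfl, hi⟩ := hS₂pshape p hp
        exact ⟨i, p', rfl, hi⟩
      have hS₂pcoe : (↑S₂p : Set (List ℕ)) = shiftUp E₁.tree.children.length '' ↑S₂ := by
        rw [← hS₂img, Finset.coe_image]
      have hconn : ConnectedIn ↑(insert ([] : List ℕ) S)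
          ↔ ConnectedIn ↑(insert ([] : List ℕ) S₁) ∧ ConnectedIn ↑(insert ([] : List ℕ) S₂) := by
        rw [Finset.coe_insert, Finset.coe_insert, Finset.coe_insert, ← hunion, Finset.coe_union,
          connectedIn_split hA hB, hS₂pcoe, connectedIn_shift]
      constructor
      · rw [hcoeff, hconn, mul_ne_zero_iff]
        exact and_congr IHa1 IHb1
      · intro hcon
        obtain ⟨hcon₁, hcon₂⟩ := hconn.mp hcon
        rw [hcoeff, IHa2 hcon₁, IHb2 hcon₂]
        have hnilS : ([] : List ℕ) ∉ S := fun h => (hSvert [] h).1 rfl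
        have hnilS₁ : ([] : List ℕ) ∉ S₁ := fun h => (hSvert₁ [] h).1 rfl
        have hnilS₂ : ([] : List ℕ) ∉ S₂ := fun h => (hSvert₂ [] h).1 rfl
        have hlab : (∏ p ∈ insert ([] : List ℕ) S, ((LDE.mul E₁ E₂).tree.labelAt p : ℤ))
            = (∏ p ∈ insert ([] : List ℕ) S₁, (E₁.tree.labelAt p : ℤ)) *
              ∏ p ∈ insert ([] : List ℕ) S₂, (E₂.tree.labelAt p : ℤ) := by
          rw [Finset.prod_insert hnilS, Finset.prod_insert hnilS₁, Finset.prod_insert hnilS₂,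
            labelAt_mul_nil]
          have hsplitprod : (∏ p ∈ S, ((LDE.mul E₁ E₂).tree.labelAt p : ℤ))
              = (∏ p ∈ S₁, ((LDE.mul E₁ E₂).tree.labelAt p : ℤ)) *
                ∏ p ∈ S₂p, ((LDE.mul E₁ E₂).tree.labelAt p : ℤ) := by
            rw [hS₁def, hS₂pdef]
            exact (Finset.prod_filter_mul_prod_filter_not S _ _).symm
          have e₁ : ∀ p ∈ S₁, ((LDE.mul E₁ E₂).tree.labelAt p : ℤ) = (E₁.tree.labelAt p : ℤ) := by
            intro p hp
            obtain ⟨i, p', rfl, hi⟩ := hS₁shape p hp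
            rw [labelAt_mul, if_pos hi]
          have e₂ : ∀ p ∈ S₂p, ((LDE.mul E₁ E₂).tree.labelAt p : ℤ)
              = (E₂.tree.labelAt (shiftDown E₁.tree.children.length p) : ℤ) := by
            intro p hp
            obtain ⟨i, p', rfl, hi⟩ := hS₂pshape p hp
            rw [labelAt_mul, if_neg (Nat.not_lt.mpr hi), shiftDown_cons]
          have e₃ : (∏ p ∈ S₂, (E₂.tree.labelAt p : ℤ))
              = ∏ p ∈ S₂p, (E₂.tree.labelAt (shiftDown E₁.tree.children.length p) : ℤ) := by
            rw [hS₂def, Finset.prod_image hdown_inj]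
          rw [hsplitprod, Finset.prod_congr rfl e₁, Finset.prod_congr rfl e₂, e₃]
          ring
        have hedisj : Disjoint E₁.tree.edgeFinset
            ((E₂.tree.edgeFinset).image (shiftUp E₁.tree.children.length)) := by
          rw [Finset.disjoint_left]
          intro q hq hq2
          obtain ⟨j, p, rfl, hj⟩ := mem_edgeFinset_mul_left hq
          obtain ⟨q', hq', heq⟩ := Finset.mem_image.mp hq2
          obtain ⟨a, b, rfl⟩ : ∃ a b, q' = a :: b := by
            rcases q' with _ | ⟨a, b⟩
            · exact absurd rfl (mem_edgeFinset_ne_nil hq')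
            · exact ⟨a, b, rfl⟩
          rw [shiftUp_cons] at heq
          injection heq with he1 _
          omega
        have hmem₁ : ∀ (j : ℕ) (p : List ℕ), j < E₁.tree.children.length →
            ((j :: p) ∈ insert ([] : List ℕ) S ↔ (j :: p) ∈ insert ([] : List ℕ) S₁) := by
          intro j p hj
          simp only [Finset.mem_insert]
          constructor
          · rintro (h | h)
            · exact Or.inl h
            · exact Or.inr ((hS₁mem _).mpr ⟨h, by simpa [List.headI] using hj⟩)
          · rintro (h | h)
            · exact Or.inl h
            · exact Or.inr ((hS₁mem _).mp h).1
        have hmem₂ : ∀ (j : ℕ) (p : List ℕ),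
            ((j + E₁.tree.children.length) :: p ∈ insert ([] : List ℕ) S
              ↔ (j :: p) ∈ insert ([] : List ℕ) S₂) := by
          intro j p
          simp only [Finset.mem_insert]
          constructor
          · rintro (h | h)
            · exact absurd h (by simp)
            · refine Or.inr ?_
              have hin : ((j + E₁.tree.children.length) :: p) ∈ S₂p :=
                (hS₂pmem _).mpr ⟨h, by simp [List.headI]⟩
              have hin2 := Finset.mem_image_of_mem (shiftDown E₁.tree.children.length) hin
              rw [← hS₂def] at hin2
              rwa [shiftDown_cons, Nat.add_sub_cancel] at hin2
          · rintro (h | h)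
            · exact absurd h (by simp)
            · refine Or.inr ?_
              have hin : shiftUp E₁.tree.children.length (j :: p) ∈ S₂p := by
                rw [← hS₂img]
                exact Finset.mem_image_of_mem _ h
              have h3 := ((hS₂pmem _).mp hin).1
              rwa [shiftUp_cons] at h3
        have hedge : (∏ q ∈ (LDE.mul E₁ E₂).tree.edgeFinset,
              if Xor (q ∈ insert ([] : List ℕ) S) (q.dropLast ∈ insert ([] : List ℕ) S)
              then ((LDE.mul E₁ E₂).tree.edgeLabelAt q : ℤ) else 1)
            = (∏ q ∈ E₁.tree.edgeFinset,
                if Xor (q ∈ insert ([] : List ℕ) S₁) (q.dropLast ∈ insert ([] : List ℕ) S₁)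
                then (E₁.tree.edgeLabelAt q : ℤ) else 1) *
              ∏ q ∈ E₂.tree.edgeFinset,
                if Xor (q ∈ insert ([] : List ℕ) S₂) (q.dropLast ∈ insert ([] : List ℕ) S₂)
                then (E₂.tree.edgeLabelAt q : ℤ) else 1 := by
          rw [edgeFinset_mul, Finset.prod_union hedisj,
            Finset.prod_image (fun a _ b _ hab => hup_inj a b hab)]
          have e₁ : ∀ q ∈ E₁.tree.edgeFinset,
              (if Xor (q ∈ insert ([] : List ℕ) S) (q.dropLast ∈ insert ([] : List ℕ) S)
               then ((LDE.mul E₁ E₂).tree.edgeLabelAt q : ℤ) else 1)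
              = (if Xor (q ∈ insert ([] : List ℕ) S₁) (q.dropLast ∈ insert ([] : List ℕ) S₁)
               then (E₁.tree.edgeLabelAt q : ℤ) else 1) := by
            intro q hq
            obtain ⟨j, p, rfl, hj⟩ := mem_edgeFinset_mul_left hq
            have hd : ((j :: p).dropLast ∈ insert ([] : List ℕ) S
                ↔ (j :: p).dropLast ∈ insert ([] : List ℕ) S₁) := by
              rcases eq_or_ne p [] with rfl | hp
              · simp
              · rw [List.dropLast_cons_of_ne_nil hp]
                exact hmem₁ j p.dropLast hj
            refine if_congr ?_ ?_ rfl
            · rw [hmem₁ j p hj, hd]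
            · rw [edgeLabelAt_mul, if_pos hj]
          have e₂ : ∀ q ∈ E₂.tree.edgeFinset,
              (if Xor ((shiftUp E₁.tree.children.length q) ∈ insert ([] : List ℕ) S)
                  ((shiftUp E₁.tree.children.length q).dropLast ∈ insert ([] : List ℕ) S)
               then ((LDE.mul E₁ E₂).tree.edgeLabelAt
                  (shiftUp E₁.tree.children.length q) : ℤ) else 1)
              = (if Xor (q ∈ insert ([] : List ℕ) S₂) (q.dropLast ∈ insert ([] : List ℕ) S₂)
               then (E₂.tree.edgeLabelAt q : ℤ) else 1) := by
            intro q hq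
            obtain ⟨j, p, rfl⟩ : ∃ j p, q = j :: p := by
              rcases q with _ | ⟨j, p⟩
              · exact absurd rfl (mem_edgeFinset_ne_nil hq)
              · exact ⟨j, p, rfl⟩
            rw [shiftUp_cons]
            have hd : (((j + E₁.tree.children.length) :: p).dropLast ∈ insert ([] : List ℕ) S
                ↔ (j :: p).dropLast ∈ insert ([] : List ℕ) S₂) := by
              rcases eq_or_ne p [] with rfl | hp
              · simp
              · rw [List.dropLast_cons_of_ne_nil hp, List.dropLast_cons_of_ne_nil hp]
                exact hmem₂ j p.dropLast
            refine if_congr ?_ ?_ rfl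
            · rw [hmem₂ j p, hd]
            · rw [edgeLabelAt_mul, if_neg (by omega), Nat.add_sub_cancel]
          rw [Finset.prod_congr rfl e₁, Finset.prod_congr rfl e₂]
        rw [hlab, hedge]
        ring
  | step E x c ih =>
      intro hE S hSvert xv hxv
      obtain ⟨hWF, hxnot, hc⟩ := hE
      have hshape : ∀ p ∈ S, ∃ p', p = 0 :: p' ∧ E.tree.IsVert p' := by
        intro p hp
        obtain ⟨hne, hv⟩ := hSvert p hp
        obtain ⟨i, p', rfl⟩ : ∃ i p', p = i :: p' := by
          rcases p with _ | ⟨i, p'⟩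
          · exact absurd rfl hne
          · exact ⟨i, p', rfl⟩
        rw [LDT.IsVert, sub?_step] at hv
        by_cases hi : i = 0
        · subst hi; rw [if_pos rfl] at hv; exact ⟨p', rfl, hv⟩
        · rw [if_neg hi] at hv; simp at hv
      have hnilS : ([] : List ℕ) ∉ S := fun h => (hSvert [] h).1 rfl
      by_cases h0 : ([0] : List ℕ) ∈ S
      · -- the distinguished child vertex is in S
        have hx0 : xv [0] = x := by
          have h := hxv _ h0
          rw [show ([0] : List ℕ) = 0 :: [] from rfl, varAt_step, if_pos rfl] at h
          exact (Option.some_inj.mp h).symm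
        set S' := S.erase [0] with hS'def
        set S'' := S'.image List.tail with hS''def
        have hS'sub : ∀ {p : List ℕ}, p ∈ S' → p ∈ S := by
          intro p hp
          rw [hS'def] at hp
          exact Finset.mem_of_mem_erase hp
        have htail : ∀ p ∈ S', (0 : ℕ) :: p.tail = p := by
          intro p hp
          obtain ⟨p', rfl, _⟩ := hshape p (hS'sub hp)
          rfl
        have hS'img : S''.image ((0 : ℕ) :: ·) = S' := by
          rw [hS''def, Finset.image_image]
          calc S'.image (((0 : ℕ) :: ·) ∘ List.tail) = S'.image id :=
                Finset.image_congr (fun p hp => htail p hp)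
            _ = S' := Finset.image_id
        have hnilS'' : ([] : List ℕ) ∉ S'' := by
          intro h
          obtain ⟨p, hp, hpt⟩ := Finset.mem_image.mp h
          have h2 := htail p hp
          rw [hpt] at h2
          rw [hS'def] at hp
          exact Finset.notMem_erase [0] S (h2 ▸ hp)
        have hS''mem : ∀ p'' ∈ S'', (0 :: p'') ∈ S' := by
          intro p'' hp''
          rw [← hS'img]
          exact Finset.mem_image_of_mem _ hp''
        have hSvert'' : ∀ p ∈ S'', p ≠ ([] : List ℕ) ∧ E.tree.IsVert p := by
          intro p hp
          refine ⟨fun h => hnilS'' (by rwa [h] at hp), ?_⟩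
          obtain ⟨p', heq, hv⟩ := hshape (0 :: p) (hS'sub (hS''mem p hp))
          injection heq with _ h2
          exact h2 ▸ hv
        have hxv'' : ∀ p ∈ S'', E.varAt p = some (xv (0 :: p)) := by
          intro p hp
          have h := hxv (0 :: p) (hS'sub (hS''mem p hp))
          rwa [varAt_step, if_neg (fun hh => hnilS'' (by rwa [hh] at hp))] at h
        have hvars'' : ∀ p ∈ S'', xv (0 :: p) ∈ E.vars :=
          fun p hp => varAt_mem_vars E (hxv'' p hp)
        obtain ⟨IH1, IH2⟩ := ih hWF S'' hSvert'' (fun p => xv (0 :: p)) hxv''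
        have hm''x : (∑ p ∈ S'', Finsupp.single (xv (0 :: p)) 1) x = 0 :=
          supp_zero_outside (msum_supp hvars'') hxnot
        have hsum : (∑ p ∈ S, Finsupp.single (xv p) 1)
            = Finsupp.single x 1 + ∑ p ∈ S'', Finsupp.single (xv (0 :: p)) 1 := by
          rw [← Finset.add_sum_erase _ _ h0, hx0, ← hS'def, ← hS'img,
            Finset.sum_image (fun a _ b _ hab => cons_inj_on 0 a b hab)]
        have hcoeff : MvPolynomial.coeff (∑ p ∈ S, Finsupp.single (xv p) 1)
            (LDE.step E x c).poly
            = MvPolynomial.coeff (∑ p ∈ S'', Finsupp.single (xv (0 :: p)) 1) E.poly := by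
          rw [hsum, poly_step, MvPolynomial.coeff_add, MvPolynomial.coeff_mul_X']
          have hxmem : x ∈ (Finsupp.single x 1 + ∑ p ∈ S'', Finsupp.single (xv (0 :: p)) 1).support := by
            rw [Finsupp.mem_support_iff, Finsupp.add_apply, Finsupp.single_apply, if_pos rfl, hm''x]
            omega
          rw [if_pos hxmem, add_tsub_cancel_left]
          have hC : MvPolynomial.coeff
              (Finsupp.single x 1 + ∑ p ∈ S'', Finsupp.single (xv (0 :: p)) 1)
              (MvPolynomial.C (c : ℤ)) = 0 := by
            rw [MvPolynomial.coeff_C, if_neg]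
            intro h
            have h2 := congrArg (fun F : ℕ →₀ ℕ => F x) h
            simp only [Finsupp.coe_zero, Pi.zero_apply, Finsupp.add_apply] at h2
            rw [hm''x, Finsupp.single_apply] at h2
            simp at h2
          rw [hC, add_zero]
        have hseteq : (↑(insert ([] : List ℕ) S) : Set (List ℕ))
            = insert [] (((0 : ℕ) :: ·) '' ↑(insert ([] : List ℕ) S'')) := by
          ext w
          simp only [Finset.coe_insert, Set.mem_insert_iff, Finset.mem_coe, Set.mem_image,
            Finset.mem_insert]
          constructor
          · rintro (rfl | hw)
            · exact Or.inl rfl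
            · obtain ⟨p', rfl, _⟩ := hshape w hw
              refine Or.inr ⟨p', ?_, rfl⟩
              by_cases hp' : p' = []
              · exact Or.inl hp'
              · refine Or.inr ?_
                have hmem : (0 :: p') ∈ S' := by
                  rw [hS'def]
                  refine Finset.mem_erase.mpr ⟨?_, hw⟩
                  intro hh
                  exact hp' (cons_inj_on 0 _ _ hh)
                have := Finset.mem_image_of_mem List.tail hmem
                rw [← hS''def] at this
                exact this
          · rintro (rfl | ⟨p', hp', rfl⟩)
            · exact Or.inl rfl
            · rcases hp' with rfl | hp'
              · exact Or.inr h0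
              · exact Or.inr (hS'sub (hS''mem p' hp'))
        have hconn : ConnectedIn ↑(insert ([] : List ℕ) S)
            ↔ ConnectedIn ↑(insert ([] : List ℕ) S'') := by
          rw [hseteq]
          exact connectedIn_cons _ (by simp)
        refine ⟨by rw [hcoeff]; exact IH1.trans hconn.symm, ?_⟩
        intro hcon
        rw [hcoeff, IH2 (hconn.mp hcon)]
        have hlab : (∏ p ∈ insert ([] : List ℕ) S, ((LDE.step E x c).tree.labelAt p : ℤ))
            = ∏ p ∈ insert ([] : List ℕ) S'', (E.tree.labelAt p : ℤ) := by
          rw [Finset.prod_insert hnilS]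
          have h1 : (((LDE.step E x c).tree.labelAt []) : ℤ) = 1 := by
            rw [labelAt_nil, tree_step]
            rfl
          rw [h1, one_mul]
          have hSimg : S = (insert ([] : List ℕ) S'').image ((0 : ℕ) :: ·) := by
            rw [Finset.image_insert, hS'img]
            exact (Finset.insert_erase h0).symm
          rw [hSimg, Finset.prod_image (fun a _ b _ hab => cons_inj_on 0 a b hab)]
          exact Finset.prod_congr rfl (fun p _ => by rw [labelAt_step])
        have hmem2 : ∀ w : List ℕ,
            ((0 :: w) ∈ insert ([] : List ℕ) S ↔ w ∈ insert ([] : List ℕ) S'') := by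
          intro w
          simp only [Finset.mem_insert]
          constructor
          · rintro (h | h)
            · exact absurd h (by simp)
            · by_cases hw : w = []
              · exact Or.inl hw
              · refine Or.inr ?_
                have hmem : (0 :: w) ∈ S' := by
                  rw [hS'def]
                  refine Finset.mem_erase.mpr ⟨?_, h⟩
                  intro hh
                  exact hw (cons_inj_on 0 _ _ hh)
                have := Finset.mem_image_of_mem List.tail hmem
                rw [← hS''def] at this
                exact this
          · rintro (rfl | h)
            · exact Or.inr h0
            · exact Or.inr (hS'sub (hS''mem w h))
        have hedge : (∏ q ∈ (LDE.step E x c).tree.edgeFinset,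
              if Xor (q ∈ insert ([] : List ℕ) S) (q.dropLast ∈ insert ([] : List ℕ) S)
              then ((LDE.step E x c).tree.edgeLabelAt q : ℤ) else 1)
            = ∏ q ∈ E.tree.edgeFinset,
              if Xor (q ∈ insert ([] : List ℕ) S'') (q.dropLast ∈ insert ([] : List ℕ) S'')
              then (E.tree.edgeLabelAt q : ℤ) else 1 := by
          rw [edgeFinset_step, vertFinset_eq,
            Finset.prod_image (fun a _ b _ hab => cons_inj_on 0 a b hab),
            Finset.prod_insert (fun h => mem_edgeFinset_ne_nil h rfl)]
          have hF0 : (if Xor ((0 :: ([] : List ℕ)) ∈ insert ([] : List ℕ) S)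
                ((0 :: ([] : List ℕ)).dropLast ∈ insert ([] : List ℕ) S)
              then ((LDE.step E x c).tree.edgeLabelAt (0 :: ([] : List ℕ)) : ℤ) else 1) = 1 := by
            rw [if_neg]
            intro hxor
            rcases hxor with ⟨_, hb⟩ | ⟨_, hb⟩
            · exact hb (Finset.mem_insert_self _ _)
            · exact hb (Finset.mem_insert_of_mem h0)
          rw [hF0, one_mul]
          refine Finset.prod_congr rfl (fun p hp => ?_)
          have hpne := mem_edgeFinset_ne_nil hp
          rw [List.dropLast_cons_of_ne_nil hpne]
          refine if_congr ?_ ?_ rfl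
          · rw [hmem2 p, hmem2 p.dropLast]
          · rw [edgeLabelAt_step E x c hpne]
        rw [hlab, hedge]
      · -- [0] ∉ S : only the empty S is connected
        have hvars : ∀ p ∈ S, xv p ∈ E.vars := by
          intro p hp
          obtain ⟨p', rfl, _⟩ := hshape p hp
          have hp' : p' ≠ [] := fun h => h0 (by rwa [h] at hp)
          have h := hxv _ hp
          rw [varAt_step, if_neg hp'] at h
          exact varAt_mem_vars E h
        have hmx : (∑ p ∈ S, Finsupp.single (xv p) 1) x = 0 :=
          supp_zero_outside (msum_supp hvars) hxnot
        have hcoeff : MvPolynomial.coeff (∑ p ∈ S, Finsupp.single (xv p) 1)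
            (LDE.step E x c).poly = if S = ∅ then (c : ℤ) else 0 := by
          rw [poly_step, MvPolynomial.coeff_add, MvPolynomial.coeff_mul_X',
            if_neg (by rw [Finsupp.mem_support_iff]; exact fun h => h hmx), zero_add,
            MvPolynomial.coeff_C]
          by_cases hS : S = ∅
          · rw [if_pos hS, if_pos (by rw [hS, Finset.sum_empty])]
          · rw [if_neg hS,
              if_neg (fun h => msum_ne_zero (Finset.nonempty_of_ne_empty hS) h.symm)]
        have hconn : ConnectedIn ↑(insert ([] : List ℕ) S) ↔ S = ∅ := by
          constructor
          · intro h
            by_contra hS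
            obtain ⟨p₀, hp₀⟩ := Finset.nonempty_of_ne_empty hS
            have hpath := h [] (by simp) p₀ (by simp [hp₀])
            have hstay : ∀ v, Relation.ReflTransGen
                (AdjIn ↑(insert ([] : List ℕ) S)) [] v → v = [] := by
              intro v hv
              induction hv with
              | refl => rfl
              | tail h₁ h₂ ihh =>
                  rw [ihh] at h₂
                  obtain ⟨_, hmem, hadj⟩ := h₂
                  rcases hadj with ⟨i, rfl⟩ | ⟨i, hi⟩
                  · exfalso
                    rw [List.nil_append] at hmem
                    simp only [Finset.coe_insert, Set.mem_insert_iff, Finset.mem_coe] at hmem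
                    rcases hmem with h' | h'
                    · exact absurd h' (by simp)
                    · obtain ⟨p', heq, _⟩ := hshape _ h'
                      injection heq with e1 e2
                      subst e1
                      exact h0 h'
                  · exfalso
                    simp at hi
            have := hstay p₀ hpath
            exact (hSvert p₀ hp₀).1 this
          · intro hS
            subst hS
            exact connectedIn_singleton
        constructor
        · rw [hcoeff, hconn]
          by_cases hS : S = ∅
          · rw [if_pos hS]
            have hcne : (c : ℤ) ≠ 0 := by positivity
            exact ⟨fun _ => hS, fun _ => hcne⟩
          · rw [if_neg hS]
            exact ⟨fun h => absurd rfl h, fun h => absurd h hS⟩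
        · intro hcon
          have hS := hconn.mp hcon
          subst hS
          rw [hcoeff, if_pos rfl]
          have hlab : ∏ p ∈ insert ([] : List ℕ) (∅ : Finset (List ℕ)),
              ((LDE.step E x c).tree.labelAt p : ℤ) = 1 := by
            rw [Finset.insert_empty, Finset.prod_singleton, labelAt_nil, tree_step]
            rfl
          have hedge : (∏ q ∈ (LDE.step E x c).tree.edgeFinset,
                if Xor (q ∈ insert ([] : List ℕ) (∅ : Finset (List ℕ)))
                  (q.dropLast ∈ insert ([] : List ℕ) (∅ : Finset (List ℕ)))
                then ((LDE.step E x c).tree.edgeLabelAt q : ℤ) else 1) = (c : ℤ) := by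
            rw [edgeFinset_step, vertFinset_eq,
              Finset.prod_image (fun a _ b _ hab => cons_inj_on 0 a b hab),
              Finset.prod_insert (fun h => mem_edgeFinset_ne_nil h rfl)]
            have hF0 : (if Xor ((0 :: ([] : List ℕ)) ∈ insert ([] : List ℕ) (∅ : Finset (List ℕ)))
                  ((0 :: ([] : List ℕ)).dropLast ∈ insert ([] : List ℕ) (∅ : Finset (List ℕ)))
                then ((LDE.step E x c).tree.edgeLabelAt (0 :: ([] : List ℕ)) : ℤ) else 1)
                = (c : ℤ) := by
              have hxor : Xor ((0 :: ([] : List ℕ)) ∈ insert ([] : List ℕ) (∅ : Finset (List ℕ)))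
                  ((0 :: ([] : List ℕ)).dropLast ∈ insert ([] : List ℕ) (∅ : Finset (List ℕ))) := by
                refine Or.inr ⟨?_, ?_⟩ <;> simp
              rw [if_pos hxor, edgeLabelAt_step_zero]
            rw [hF0]
            have hrest : ∀ p ∈ E.tree.edgeFinset,
                (if Xor ((0 :: p) ∈ insert ([] : List ℕ) (∅ : Finset (List ℕ)))
                  ((0 :: p).dropLast ∈ insert ([] : List ℕ) (∅ : Finset (List ℕ)))
                then ((LDE.step E x c).tree.edgeLabelAt (0 :: p) : ℤ) else 1) = 1 := by
              intro p hp
              have hpne := mem_edgeFinset_ne_nil hp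
              rw [List.dropLast_cons_of_ne_nil hpne, if_neg]
              rintro (⟨ha, _⟩ | ⟨ha, _⟩) <;> simp at ha
            rw [Finset.prod_congr rfl hrest, Finset.prod_const_one, mul_one]
          rw [hlab, hedge, one_mul]
/-- For a set `S` of non-root vertices of `T(E)`, the monomial
`∏_{v ∈ S} x_v` appears in the polynomial of `E` iff the subgraph induced by
`S ∪ {root}` is a subtree (i.e. connected), in which case its coefficient is
`(∏_{v ∈ S∪{root}} w(v)) · (∏_{e : exactly one endpoint in S∪{root}} w(e))`. -/
theorem coefficient_formula (E : LDE) (hE : E.WF) (S : Finset (List ℕ))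
    (hSvert : ∀ p ∈ S, p ≠ ([] : List ℕ) ∧ E.tree.IsVert p)
    (xv : List ℕ → ℕ) (hxv : ∀ p ∈ S, E.varAt p = some (xv p)) :
    (MvPolynomial.coeff (∑ p ∈ S, Finsupp.single (xv p) 1) E.poly ≠ 0 ↔
      ConnectedIn ↑(insert ([] : List ℕ) S)) ∧
    (ConnectedIn ↑(insert ([] : List ℕ) S) →
      MvPolynomial.coeff (∑ p ∈ S, Finsupp.single (xv p) 1) E.poly =
        (∏ p ∈ insert ([] : List ℕ) S, (E.tree.labelAt p : ℤ)) *
        ∏ q ∈ E.tree.edgeFinset,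
          if Xor (q ∈ insert ([] : List ℕ) S) (q.dropLast ∈ insert ([] : List ℕ) S)
          then (E.tree.edgeLabelAt q : ℤ) else 1) := by
  exact master E hE S hSvert xv hxv
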